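/- Let n ≥ 5 and let y ∈ H \ J̃'(n−1,2). Then J̃'(n−1,2) ∪ {y} is a two-distance set if and only if y belongs to X_1^+ ∪ X_1^- ∪ X_2^+ ∪ X_2^- ∪ X_3^+ ∪ X_3^-, or, in case 5 ≤ n ≤ 10, to X_4^+ ∪ X_4^-. Moreover, for each of these eight sets X, any two distinct vectors of X are at distance √2 or 2 from each other, so that J̃'(n−1,2) ∪ X is itself a two-distance set. -/

import Mathlib

noncomputable section

/-- The set of distances between distinct points of `S`. -/
def distSet {n : ℕ} (S : Set (EuclideanSpace ℝ (Fin n))) : Set ℝ :=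
  {d | ∃ x ∈ S, ∃ y ∈ S, x ≠ y ∧ d = dist x y}

/-- `S` is an `s`-distance set: exactly `s` distances occur between distinct points. -/
def IsSDistanceSet {n : ℕ} (s : ℕ) (S : Set (EuclideanSpace ℝ (Fin n))) : Prop :=
  (distSet S).Finite ∧ (distSet S).ncard = s

/-- The representation `J̃'(n-1,2) = {eᵢ + eⱼ : 1 ≤ i < j ≤ n-1}` of the Johnson graph
`J(n-1,2)` inside `ℝⁿ` (0-based: indices `< n-1`, i.e. all but the last coordinate). -/
def JohnsonRep' (n : ℕ) : Set (EuclideanSpace ℝ (Fin n)) :=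
  {x | ∃ i j : Fin n, (i : ℕ) < (j : ℕ) ∧ (j : ℕ) < n - 1 ∧
    x = EuclideanSpace.single i 1 + EuclideanSpace.single j 1}

/-- The hyperplane `H = {x ∈ ℝⁿ : ∑ xᵢ = 2}`. -/
def Hyp2 (n : ℕ) : Set (EuclideanSpace ℝ (Fin n)) :=
  {x | ∑ i, x i = (2 : ℝ)}

/-- `X₁^ε`: the single vector `(((2n + ε·2√n)/(n(n-1)))^{n-1}, -ε·2√n/n)`. -/
def X1set (n : ℕ) (ε : ℝ) : Set (EuclideanSpace ℝ (Fin n)) :=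
  {x | (∀ i : Fin n, (i : ℕ) < n - 1 →
      x i = (2 * n + ε * (2 * Real.sqrt n)) / ((n : ℝ) * ((n : ℝ) - 1))) ∧
    (∀ i : Fin n, (i : ℕ) = n - 1 → x i = -ε * (2 * Real.sqrt n) / n)}

/-- `X₂^ε`: the single vector `(((2n + ε·√(2n²+2n))/(n(n-1)))^{n-1}, -ε·√(2n²+2n)/n)`. -/
def X2set (n : ℕ) (ε : ℝ) : Set (EuclideanSpace ℝ (Fin n)) :=
  {x | (∀ i : Fin n, (i : ℕ) < n - 1 →
      x i = (2 * n + ε * Real.sqrt (2 * (n : ℝ) ^ 2 + 2 * n)) / ((n : ℝ) * ((n : ℝ) - 1))) ∧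
    (∀ i : Fin n, (i : ℕ) = n - 1 →
      x i = -ε * Real.sqrt (2 * (n : ℝ) ^ 2 + 2 * n) / n)}

/-- `X₃^ε`: the `n-1` vectors `((n+ε)/(n-1), ((1+ε)/(n-1))^{n-2}, -ε)^{P'}`. -/
def X3set (n : ℕ) (ε : ℝ) : Set (EuclideanSpace ℝ (Fin n)) :=
  {x | {i : Fin n | (i : ℕ) < n - 1 ∧ x i = ((n : ℝ) + ε) / ((n : ℝ) - 1)}.ncard = 1 ∧
    {i : Fin n | (i : ℕ) < n - 1 ∧ x i = (1 + ε) / ((n : ℝ) - 1)}.ncard = n - 2 ∧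
    (∀ i : Fin n, (i : ℕ) = n - 1 → x i = -ε)}

/-- `X₄^ε`: the `n-1` vectors
`(((3n + ε√(10n-n²))/(n(n-1)))^{n-2}, (-n² + 4n + ε√(10n-n²))/(n(n-1)), -ε√(10n-n²)/n)^{P'}`. -/
def X4set (n : ℕ) (ε : ℝ) : Set (EuclideanSpace ℝ (Fin n)) :=
  {x | {i : Fin n | (i : ℕ) < n - 1 ∧
      x i = (3 * n + ε * Real.sqrt (10 * n - (n : ℝ) ^ 2)) / ((n : ℝ) * ((n : ℝ) - 1))}.ncard
        = n - 2 ∧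
    {i : Fin n | (i : ℕ) < n - 1 ∧
      x i = (-(n : ℝ) ^ 2 + 4 * n + ε * Real.sqrt (10 * n - (n : ℝ) ^ 2)) /
        ((n : ℝ) * ((n : ℝ) - 1))}.ncard = 1 ∧
    (∀ i : Fin n, (i : ℕ) = n - 1 → x i = -ε * Real.sqrt (10 * n - (n : ℝ) ^ 2) / n)}

namespace AV
variable {n : ℕ}
abbrev E (n : ℕ) := EuclideanSpace ℝ (Fin n)

def jp (i j : Fin n) : E n := EuclideanSpace.single i 1 + EuclideanSpace.single j 1

lemma jp_apply (i j k : Fin n) :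
    jp i j k = (if k = i then (1:ℝ) else 0) + (if k = j then 1 else 0) := by
  simp [jp, EuclideanSpace.single_apply]

def Av (y : E n) : ℝ := ∑ k, (y k)^2

lemma dist_sq (y x : E n) : dist y x ^ 2 = ∑ k, (y k - x k)^2 := by
  rw [EuclideanSpace.dist_eq, Real.sq_sqrt (by positivity)]
  simp [Real.dist_eq, sq_abs]

lemma distA (y : E n) (i j : Fin n) (hij : i ≠ j) :
    dist y (jp i j) ^ 2 = Av y - 2*(y i + y j) + 2 := by
  rw [dist_sq]
  have : ∀ k, (y k - jp i j k)^2
      = (y k)^2 - 2*(y k * (if k = i then (1:ℝ) else 0)) - 2*(y k * (if k = j then (1:ℝ) else 0))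
        + ((if k = i then (1:ℝ) else 0) + (if k = j then 1 else 0))^2 := by
    intro k; rw [jp_apply]; ring
  simp only [this]
  rw [Finset.sum_add_distrib, Finset.sum_sub_distrib, Finset.sum_sub_distrib]
  have h1 : ∑ k, (y k * (if k = i then (1:ℝ) else 0)) = y i := by
    simp [Finset.sum_ite_eq']
  have h2 : ∑ k, (y k * (if k = j then (1:ℝ) else 0)) = y j := by
    simp [Finset.sum_ite_eq']
  have h3 : ∑ k : Fin n, ((if k = i then (1:ℝ) else 0) + (if k = j then 1 else 0))^2 = 2 := by
    have : ∀ k : Fin n, ((if k = i then (1:ℝ) else 0) + (if k = j then 1 else 0))^2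
        = (if k = i then (1:ℝ) else 0) + (if k = j then 1 else 0) := by
      intro k; split_ifs with h h' <;> simp_all
    rw [Finset.sum_congr rfl (fun k _ => this k), Finset.sum_add_distrib]
    have hij' : j ≠ i := hij.symm
    simp [Finset.sum_ite_eq']
    norm_num
  simp only [← Finset.mul_sum, h1, h2, h3, Av]
  ring

lemma eq_two_of_sq {d : ℝ} (hd : 0 ≤ d) (h : d^2 = 4) : d = 2 := by
  have : d = Real.sqrt (d^2) := (Real.sqrt_sq hd).symm
  rw [h, show (4:ℝ) = 2^2 by norm_num, Real.sqrt_sq (by norm_num)] at this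
  exact this

lemma eq_sqrt2_of_sq {d : ℝ} (hd : 0 ≤ d) (h : d^2 = 2) : d = Real.sqrt 2 := by
  have : d = Real.sqrt (d^2) := (Real.sqrt_sq hd).symm
  rw [h] at this; exact this

lemma dist_mem_iff {d : ℝ} (hd : 0 ≤ d) :
    d ∈ ({Real.sqrt 2, 2} : Set ℝ) ↔ d^2 = 2 ∨ d^2 = 4 := by
  constructor
  · rintro (rfl | rfl)
    · left; exact Real.sq_sqrt (by norm_num)
    · right; norm_num
  · rintro (h | h)
    · left; exact eq_sqrt2_of_sq hd h
    · right; exact eq_two_of_sq hd h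

lemma mem_J_iff {x : E n} :
    x ∈ JohnsonRep' n ↔ ∃ i j : Fin n, (i:ℕ) < (j:ℕ) ∧ (j:ℕ) < n - 1 ∧ x = jp i j := Iff.rfl

/-- distance between two Johnson points -/
lemma distJJ (i j k l : Fin n) (hij : i ≠ j) (hkl : k ≠ l) :
    dist (jp i j) (jp k l) ^ 2 = 4 - 2*((jp k l) i + (jp k l) j) := by
  have hA : Av (jp k l) = 2 := by
    have : ∀ m : Fin n, (jp k l m)^2 = (if m = k then (1:ℝ) else 0) + (if m = l then 1 else 0) := by
      intro m; rw [jp_apply]; split_ifs with h h' <;> simp_all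
    rw [Av, Finset.sum_congr rfl (fun m _ => this m), Finset.sum_add_distrib]
    simp [Finset.sum_ite_eq']
    norm_num
  have := distA (jp k l) i j hij
  rw [dist_comm] at this
  rw [this, hA]; ring

lemma jp_coord_mem (k l m : Fin n) (hkl : k ≠ l) : jp k l m = 0 ∨ jp k l m = 1 := by
  rw [jp_apply]; split_ifs with h h' <;> simp_all

lemma distJJ_mem (u v : E n) (hu : u ∈ JohnsonRep' n) (hv : v ∈ JohnsonRep' n) (huv : u ≠ v) :
    dist u v = Real.sqrt 2 ∨ dist u v = 2 := by
  obtain ⟨i, j, hij, hj, rfl⟩ := hu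
  obtain ⟨k, l, hkl, hl, rfl⟩ := hv
  have hij' : i ≠ j := fun h => by simp [h] at hij
  have hkl' : k ≠ l := fun h => by simp [h] at hkl
  show dist (jp i j) (jp k l) = Real.sqrt 2 ∨ dist (jp i j) (jp k l) = 2
  have h2 := distJJ i j k l hij' hkl'
  have hne : dist (jp i j) (jp k l) ≠ 0 := fun h => huv (by rwa [dist_eq_zero] at h)
  have hpos : (0:ℝ) ≤ dist (jp i j) (jp k l) := dist_nonneg
  rcases jp_coord_mem k l i hkl' with h1 | h1 <;> rcases jp_coord_mem k l j hkl' with h3 | h3 <;>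
    rw [h1, h3] at h2
  · right; exact eq_two_of_sq hpos (by linarith)
  · left; exact eq_sqrt2_of_sq hpos (by linarith)
  · left; exact eq_sqrt2_of_sq hpos (by linarith)
  · exfalso; exact hne (by nlinarith)

def Tf (n : ℕ) : Finset (Fin n) := Finset.univ.filter (fun i => (i:ℕ) < n - 1)

def lastI (n : ℕ) (hn : 5 ≤ n) : Fin n := ⟨n-1, by omega⟩

lemma Tf_eq (hn : 5 ≤ n) : Tf n = Finset.univ.erase (lastI n hn) := by
  ext i
  simp [Tf, lastI, Fin.ext_iff]
  omega

lemma card_Tf (hn : 5 ≤ n) : (Tf n).card = n - 1 := by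
  rw [Tf_eq hn, Finset.card_erase_of_mem (Finset.mem_univ _)]
  simp

lemma mem_Tf {i : Fin n} : i ∈ Tf n ↔ (i:ℕ) < n - 1 := by simp [Tf]

lemma sum_split (hn : 5 ≤ n) (f : Fin n → ℝ) :
    ∑ k, f k = (∑ k ∈ Tf n, f k) + f (lastI n hn) := by
  rw [Tf_eq hn]
  rw [Finset.sum_erase_add]
  exact Finset.mem_univ _

lemma val_cases (hn : 5 ≤ n) (i : Fin n) : (i:ℕ) < n - 1 ∨ (i:ℕ) = n - 1 := by
  have := i.isLt; omega

lemma sqrt2_ne_two : Real.sqrt 2 ≠ 2 := by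
  intro h
  have := Real.sq_sqrt (by norm_num : (2:ℝ) ≥ 0)
  rw [h] at this; norm_num at this

lemma jp_mem_J (hn : 5 ≤ n) {i j : Fin n} (h : (i:ℕ) < (j:ℕ)) (h2 : (j:ℕ) < n - 1) :
    jp i j ∈ JohnsonRep' n := ⟨i, j, h, h2, rfl⟩

lemma distSet_eq (hn : 5 ≤ n) (S : Set (E n))
    (h1 : ∀ x ∈ S, ∀ u ∈ JohnsonRep' n, dist x u = Real.sqrt 2 ∨ dist x u = 2)
    (h2 : ∀ x ∈ S, ∀ x' ∈ S, x ≠ x' → dist x x' = Real.sqrt 2 ∨ dist x x' = 2) :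
    distSet (JohnsonRep' n ∪ S) = {Real.sqrt 2, 2} := by
  have i0 : Fin n := ⟨0, by omega⟩
  apply Set.eq_of_subset_of_subset
  · rintro d ⟨x, hx, y, hy, hxy, rfl⟩
    have : dist x y = Real.sqrt 2 ∨ dist x y = 2 := by
      rcases hx with hx | hx <;> rcases hy with hy | hy
      · exact distJJ_mem x y hx hy hxy
      · rcases h1 y hy x hx with h | h <;> rw [dist_comm] at h <;> [left; right] <;> exact h
      · exact h1 x hx y hy
      · exact h2 x hx y hy hxy
    simpa using this
  · -- both distances occur among Johnson points
    set a : Fin n := ⟨0, by omega⟩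
    set b : Fin n := ⟨1, by omega⟩
    set c : Fin n := ⟨2, by omega⟩
    set e : Fin n := ⟨3, by omega⟩
    have hab : (a:ℕ) < (b:ℕ) := by simp [a, b]
    have hbc : (b:ℕ) < (c:ℕ) := by simp [b, c]
    have hce : (c:ℕ) < (e:ℕ) := by simp [c, e]
    have hb1 : (b:ℕ) < n - 1 := by simp [b]; omega
    have hc1 : (c:ℕ) < n - 1 := by simp [c]; omega
    have he1 : (e:ℕ) < n - 1 := by simp [e]; omega
    have hu1 : jp a b ∈ JohnsonRep' n := jp_mem_J hn hab hb1
    have hu2 : jp b c ∈ JohnsonRep' n := jp_mem_J hn hbc hc1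
    have hu3 : jp c e ∈ JohnsonRep' n := jp_mem_J hn hce he1
    have hane : a ≠ b := fun h => by simp [Fin.ext_iff, a, b] at h
    have hbne : b ≠ c := fun h => by simp [Fin.ext_iff, b, c] at h
    have hcne : c ≠ e := fun h => by simp [Fin.ext_iff, c, e] at h
    have habc : jp a b ≠ jp b c := by
      intro h
      have := congrArg (fun z : E n => z a) h
      rw [jp_apply, jp_apply] at this
      simp [hane, Fin.ext_iff, a, b, c] at this
    have habce : jp a b ≠ jp c e := by
      intro h
      have := congrArg (fun z : E n => z a) h
      rw [jp_apply, jp_apply] at this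
      simp [hane, Fin.ext_iff, a, b, c, e] at this
    have d1 : dist (jp a b) (jp b c) = Real.sqrt 2 := by
      have h2' := distJJ a b b c hane hbne
      have : jp b c a = 0 := by
        rw [jp_apply]; simp [Fin.ext_iff, a, b, c]
      have hb' : jp b c b = 1 := by
        rw [jp_apply]; simp [hbne]
      rw [this, hb'] at h2'
      exact eq_sqrt2_of_sq dist_nonneg (by linarith)
    have d2 : dist (jp a b) (jp c e) = 2 := by
      have h2' := distJJ a b c e hane hcne
      have ha' : jp c e a = 0 := by rw [jp_apply]; simp [Fin.ext_iff, a, c, e]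
      have hb' : jp c e b = 0 := by rw [jp_apply]; simp [Fin.ext_iff, b, c, e]
      rw [ha', hb'] at h2'
      exact eq_two_of_sq dist_nonneg (by linarith)
    rintro d (rfl | rfl)
    · exact ⟨jp a b, Or.inl hu1, jp b c, Or.inl hu2, habc, d1.symm⟩
    · exact ⟨jp a b, Or.inl hu1, jp c e, Or.inl hu3, habce, d2.symm⟩

lemma twoDist_of (hn : 5 ≤ n) (S : Set (E n))
    (h1 : ∀ x ∈ S, ∀ u ∈ JohnsonRep' n, dist x u = Real.sqrt 2 ∨ dist x u = 2)
    (h2 : ∀ x ∈ S, ∀ x' ∈ S, x ≠ x' → dist x x' = Real.sqrt 2 ∨ dist x x' = 2) :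
    IsSDistanceSet 2 (JohnsonRep' n ∪ S) := by
  rw [IsSDistanceSet, distSet_eq hn S h1 h2]
  exact ⟨(Set.finite_singleton _).insert _, Set.ncard_pair sqrt2_ne_two⟩

lemma good_of_twoDist (hn : 5 ≤ n) (y : E n) (hyJ : y ∉ JohnsonRep' n)
    (h : IsSDistanceSet 2 (JohnsonRep' n ∪ {y})) :
    ∀ u ∈ JohnsonRep' n, dist y u = Real.sqrt 2 ∨ dist y u = 2 := by
  intro u hu
  by_contra hcon
  push_neg at hcon
  obtain ⟨hc1, hc2⟩ := hcon
  have hsub0 : {Real.sqrt 2, 2} ⊆ distSet (JohnsonRep' n ∪ ({y} : Set (E n))) := by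
    have := distSet_eq hn (∅ : Set (E n)) (by simp) (by simp)
    rw [← this]
    rintro d ⟨x, hx, z, hz, hxz, rfl⟩
    exact ⟨x, Or.inl (by simpa using hx), z, Or.inl (by simpa using hz), hxz, rfl⟩
  have hyu : y ≠ u := fun h => hyJ (h ▸ hu)
  have hd : dist y u ∈ distSet (JohnsonRep' n ∪ ({y} : Set (E n))) :=
    ⟨y, Or.inr rfl, u, Or.inl hu, hyu, rfl⟩
  have hsub : insert (dist y u) ({Real.sqrt 2, 2} : Set ℝ) ⊆ distSet (JohnsonRep' n ∪ ({y} : Set (E n))) := by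
    rintro d (rfl | hd2)
    · exact hd
    · exact hsub0 hd2
  have h3 : (insert (dist y u) ({Real.sqrt 2, (2:ℝ)} : Set ℝ)).ncard = 3 := by
    rw [Set.ncard_insert_of_notMem (by simp [hc1, hc2]) (Set.toFinite _),
      Set.ncard_pair sqrt2_ne_two]
  have := Set.ncard_le_ncard hsub h.1
  rw [h3, h.2] at this
  omega

def SumCond (n : ℕ) (y : E n) : Prop :=
  ∀ i j : Fin n, i ≠ j → (i:ℕ) < n - 1 → (j:ℕ) < n - 1 →
    2*(y i + y j) = Av y ∨ 2*(y i + y j) = Av y - 2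

lemma sumCond_of_good (hn : 5 ≤ n) (y : E n)
    (hg : ∀ u ∈ JohnsonRep' n, dist y u = Real.sqrt 2 ∨ dist y u = 2) : SumCond n y := by
  intro i j hij hi hj
  have key : ∀ i j : Fin n, (i:ℕ) < (j:ℕ) → (j:ℕ) < n - 1 →
      2*(y i + y j) = Av y ∨ 2*(y i + y j) = Av y - 2 := by
    intro i j hij hj
    have hne : i ≠ j := fun h => by simp [h] at hij
    have hd := hg (jp i j) (jp_mem_J hn hij hj)
    have hA := distA y i j hne
    rcases hd with h | h
    · rw [h, Real.sq_sqrt (by norm_num : (2:ℝ) ≥ 0)] at hA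
      left; linarith
    · rw [h] at hA
      norm_num at hA
      right; linarith
  have hvne : (i:ℕ) ≠ (j:ℕ) := fun h => hij (Fin.ext h)
  rcases lt_or_gt_of_ne hvne with h | h
  · exact key i j h hj
  · rcases key j i h hi with h' | h' <;> [left; right] <;> linarith

lemma good_of_sumCond (hn : 5 ≤ n) (y : E n) (hsc : SumCond n y) :
    ∀ u ∈ JohnsonRep' n, dist y u = Real.sqrt 2 ∨ dist y u = 2 := by
  rintro u ⟨i, j, hij, hj, rfl⟩
  have hne : i ≠ j := fun h => by simp [h] at hij
  show dist y (jp i j) = Real.sqrt 2 ∨ dist y (jp i j) = 2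
  have hA := distA y i j hne
  rcases hsc i j hne (by omega) hj with h | h
  · left; exact eq_sqrt2_of_sq dist_nonneg (by linarith)
  · right; exact eq_two_of_sq dist_nonneg (by linarith)

lemma classify_two (hn : 5 ≤ n) (y : E n) (hsc : SumCond n y) :
    (∃ b, ∀ i ∈ Tf n, y i = b) ∨
    (∃ m ∈ Tf n, ∃ b, y m ≠ b ∧ ∀ i ∈ Tf n, i ≠ m → y i = b) := by
  by_cases hall : ∃ b, ∀ i ∈ Tf n, y i = b
  · exact Or.inl hall
  right
  push_neg at hall
  -- find two indices with different values
  have h0 : (⟨0, by omega⟩ : Fin n) ∈ Tf n := by rw [mem_Tf]; simp; omega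
  obtain ⟨v, hv, hvne⟩ := hall (y ⟨0, by omega⟩)
  set u : Fin n := ⟨0, by omega⟩ with hu_def
  have hu : u ∈ Tf n := h0
  set a := y u with ha_def
  set b := y v with hb_def
  have hab : a ≠ b := fun h => hvne h.symm
  have huv : u ≠ v := fun h => hab (by rw [ha_def, h, ← hb_def])
  -- claim 1 : every value is a or b
  have claim1 : ∀ i ∈ Tf n, y i = a ∨ y i = b := by
    intro i hi
    by_cases hiu : i = u
    · left; rw [hiu]
    by_cases hiv : i = v
    · right; rw [hiv]
    by_contra hcon
    push_neg at hcon
    obtain ⟨hia, hib⟩ := hcon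
    have s1 := hsc i u hiu (mem_Tf.mp hi) (mem_Tf.mp hu)
    have s2 := hsc i v hiv (mem_Tf.mp hi) (mem_Tf.mp hv)
    have s3 := hsc u v huv (mem_Tf.mp hu) (mem_Tf.mp hv)
    rw [← ha_def] at s1 s3
    rw [← hb_def] at s2 s3
    rcases s1 with s1 | s1 <;> rcases s2 with s2 | s2 <;> rcases s3 with s3 | s3 <;>
      first
        | exact hia (by linarith)
        | exact hib (by linarith)
        | exact hab (by linarith)
  by_cases hw : ∃ w ∈ Tf n, w ≠ u ∧ y w = a
  · -- value a occurs twice; so b occurs only at v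
    obtain ⟨w, hwT, hwu, hwa⟩ := hw
    refine ⟨v, hv, a, fun h => hab h.symm, ?_⟩
    intro i hi hivne
    rcases claim1 i hi with h | h
    · exact h
    exfalso
    -- u w have value a ; v i have value b ; contradiction
    have s1 := hsc u w hwu.symm (mem_Tf.mp hu) (mem_Tf.mp hwT)
    have s2 := hsc v i (fun h' => hivne h'.symm) (mem_Tf.mp hv) (mem_Tf.mp hi)
    have s3 := hsc u v huv (mem_Tf.mp hu) (mem_Tf.mp hv)
    rw [hwa, ← ha_def] at s1
    rw [h, ← hb_def] at s2
    rw [← ha_def, ← hb_def] at s3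
    rcases s1 with s1 | s1 <;> rcases s2 with s2 | s2 <;> rcases s3 with s3 | s3 <;>
      exact hab (by linarith)
  · push_neg at hw
    refine ⟨u, hu, b, hab, ?_⟩
    intro i hi hiu
    rcases claim1 i hi with h | h
    · exact absurd h (hw i hi hiu)
    · exact h

lemma eq_lastI (hn : 5 ≤ n) {i : Fin n} (h : (i:ℕ) = n - 1) : i = lastI n hn := Fin.ext (by simp [lastI, h])

lemma cast_sub_one (hn : 5 ≤ n) : ((n-1 : ℕ) : ℝ) = (n:ℝ) - 1 := by
  rw [Nat.cast_sub (by omega), Nat.cast_one]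

lemma cast_sub_two (hn : 5 ≤ n) : ((n-2 : ℕ) : ℝ) = (n:ℝ) - 2 := by
  rw [Nat.cast_sub (by omega)]; norm_num

lemma sum_T_const (hn : 5 ≤ n) (f : Fin n → ℝ) (c : ℝ) (h : ∀ i ∈ Tf n, f i = c) :
    ∑ k ∈ Tf n, f k = ((n:ℝ)-1) * c := by
  rw [Finset.sum_congr rfl h, Finset.sum_const, card_Tf hn, nsmul_eq_mul, cast_sub_one hn]

lemma sum_T_two (hn : 5 ≤ n) (f : Fin n → ℝ) (m : Fin n) (hm : m ∈ Tf n) (c : ℝ)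
    (h : ∀ i ∈ Tf n, i ≠ m → f i = c) :
    ∑ k ∈ Tf n, f k = f m + ((n:ℝ)-2) * c := by
  rw [← Finset.add_sum_erase _ f hm]
  congr 1
  rw [Finset.sum_congr rfl
      (fun i hi => h i (Finset.mem_of_mem_erase hi) (Finset.ne_of_mem_erase hi)),
    Finset.sum_const, Finset.card_erase_of_mem hm, card_Tf hn, nsmul_eq_mul]
  have : n - 1 - 1 = n - 2 := by omega
  rw [this, cast_sub_two hn]

lemma n_pos (hn : 5 ≤ n) : (0:ℝ) < n := by exact_mod_cast Nat.pos_of_ne_zero (by omega)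

lemma n1_pos (hn : 5 ≤ n) : (0:ℝ) < (n:ℝ) - 1 := by
  have : (5:ℝ) ≤ n := by exact_mod_cast hn
  linarith

set_option maxHeartbeats 1000000 in
lemma case_const (hn : 5 ≤ n) (y : E n) (hH : ∑ i, y i = 2) (hsc : SumCond n y)
    (b : ℝ) (hb : ∀ i ∈ Tf n, y i = b) :
    y ∈ X1set n 1 ∨ y ∈ X1set n (-1) ∨ y ∈ X2set n 1 ∨ y ∈ X2set n (-1) := by
  have hnR : (5:ℝ) ≤ n := by exact_mod_cast hn
  set t := y (lastI n hn) with ht_def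
  have hsum : ((n:ℝ)-1)*b + t = 2 := by
    rw [sum_split hn y, sum_T_const hn y b hb] at hH
    linarith
  have hA : Av y = ((n:ℝ)-1)*b^2 + t^2 := by
    rw [Av, sum_split hn (fun k => y k ^ 2),
      sum_T_const hn _ (b^2) (fun i hi => by rw [hb i hi])]
  have h0T : (⟨0, by omega⟩ : Fin n) ∈ Tf n := by rw [mem_Tf]; simp; omega
  have h1T : (⟨1, by omega⟩ : Fin n) ∈ Tf n := by rw [mem_Tf]; simp; omega
  have h01 : (⟨0, by omega⟩ : Fin n) ≠ ⟨1, by omega⟩ := by simp [Fin.ext_iff]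
  have hs := hsc _ _ h01 (mem_Tf.mp h0T) (mem_Tf.mp h1T)
  rw [hb _ h0T, hb _ h1T, hA] at hs
  have hnn : (0:ℝ) < n := n_pos hn
  have hn1 : (0:ℝ) < (n:ℝ) - 1 := n1_pos hn
  have hlast : ∀ i : Fin n, (i:ℕ) = n - 1 → y i = t := by
    intro i hi; rw [eq_lastI hn hi]
  rcases hs with hs | hs
  · -- X1 case : 4b = A
    have key : (n:ℝ)*((n:ℝ)-1)*b^2 - 4*n*b + 4 = 0 := by
      linear_combination (-1:ℝ) * hs + (((n:ℝ)-1)*b - 2 - t) * hsum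
    have hsq : ((n:ℝ)*((n:ℝ)-1)*b - 2*n)^2 = 4*n := by
      linear_combination ((n:ℝ)*((n:ℝ)-1)) * key
    set s := Real.sqrt n with hs_def
    have hs2 : s^2 = n := Real.sq_sqrt hnn.le
    have hs0 : (0:ℝ) ≤ s := Real.sqrt_nonneg _
    have habs : |(n:ℝ)*((n:ℝ)-1)*b - 2*n| = 2*s := by
      have h1 : Real.sqrt (((n:ℝ)*((n:ℝ)-1)*b - 2*n)^2) = Real.sqrt ((2*s)^2) := by
        rw [hsq]; congr 1; linear_combination (-4:ℝ) * hs2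
      rw [Real.sqrt_sq_eq_abs, Real.sqrt_sq (by positivity)] at h1
      exact h1
    rcases abs_cases ((n:ℝ)*((n:ℝ)-1)*b - 2*n) with ⟨heq, _⟩ | ⟨heq, _⟩ <;> rw [heq] at habs
    · -- ε = 1
      left
      have hne1 : (n:ℝ) ≠ 0 := hnn.ne'
      have hne2 : (n:ℝ) - 1 ≠ 0 := hn1.ne'
      have hbv : b = (2*(n:ℝ) + 1*(2*s))/((n:ℝ)*((n:ℝ)-1)) := by
        field_simp
        linarith
      have htv : t = -1 * (2*s) / n := by
        have h2 : t = 2 - ((n:ℝ)-1)*b := by linarith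
        rw [h2, hbv]
        field_simp
        ring
      exact ⟨fun i hi => by rw [hb i (mem_Tf.mpr hi), hbv],
        fun i hi => by rw [hlast i hi, htv]⟩
    · -- ε = -1
      right; left
      have hne1 : (n:ℝ) ≠ 0 := hnn.ne'
      have hne2 : (n:ℝ) - 1 ≠ 0 := hn1.ne'
      have hbv : b = (2*(n:ℝ) + (-1)*(2*s))/((n:ℝ)*((n:ℝ)-1)) := by
        field_simp
        linarith
      have htv : t = -(-1) * (2*s) / n := by
        have h2 : t = 2 - ((n:ℝ)-1)*b := by linarith
        rw [h2, hbv]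
        field_simp
        ring
      exact ⟨fun i hi => by rw [hb i (mem_Tf.mpr hi), hbv],
        fun i hi => by rw [hlast i hi, htv]⟩
  · -- X2 case : 4b = A - 2
    have key : (n:ℝ)*((n:ℝ)-1)*b^2 - 4*n*b + 2 = 0 := by
      linear_combination (-1:ℝ) * hs + (((n:ℝ)-1)*b - 2 - t) * hsum
    have hsq : ((n:ℝ)*((n:ℝ)-1)*b - 2*n)^2 = 2*(n:ℝ)^2 + 2*n := by
      linear_combination ((n:ℝ)*((n:ℝ)-1)) * key
    set s := Real.sqrt (2*(n:ℝ)^2 + 2*n) with hs_def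
    have hs2 : s^2 = 2*(n:ℝ)^2 + 2*n := Real.sq_sqrt (by positivity)
    have hs0 : (0:ℝ) ≤ s := Real.sqrt_nonneg _
    have habs : |(n:ℝ)*((n:ℝ)-1)*b - 2*n| = s := by
      have h1 : Real.sqrt (((n:ℝ)*((n:ℝ)-1)*b - 2*n)^2) = Real.sqrt (s^2) := by
        rw [hsq, hs2]
      rw [Real.sqrt_sq_eq_abs, Real.sqrt_sq hs0] at h1
      exact h1
    rcases abs_cases ((n:ℝ)*((n:ℝ)-1)*b - 2*n) with ⟨heq, _⟩ | ⟨heq, _⟩ <;> rw [heq] at habs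
    · right; right; left
      have hne1 : (n:ℝ) ≠ 0 := hnn.ne'
      have hne2 : (n:ℝ) - 1 ≠ 0 := hn1.ne'
      have hbv : b = (2*(n:ℝ) + 1*s)/((n:ℝ)*((n:ℝ)-1)) := by
        field_simp
        linarith
      have htv : t = -1 * s / n := by
        have h2 : t = 2 - ((n:ℝ)-1)*b := by linarith
        rw [h2, hbv]
        field_simp
        ring
      exact ⟨fun i hi => by rw [hb i (mem_Tf.mpr hi), hbv],
        fun i hi => by rw [hlast i hi, htv]⟩
    · right; right; right
      have hne1 : (n:ℝ) ≠ 0 := hnn.ne'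
      have hne2 : (n:ℝ) - 1 ≠ 0 := hn1.ne'
      have hbv : b = (2*(n:ℝ) + (-1)*s)/((n:ℝ)*((n:ℝ)-1)) := by
        field_simp
        linarith
      have htv : t = -(-1) * s / n := by
        have h2 : t = 2 - ((n:ℝ)-1)*b := by linarith
        rw [h2, hbv]
        field_simp
        ring
      exact ⟨fun i hi => by rw [hb i (mem_Tf.mpr hi), hbv],
        fun i hi => by rw [hlast i hi, htv]⟩

lemma ncard_T (hn : 5 ≤ n) : {i : Fin n | (i:ℕ) < n - 1}.ncard = n - 1 := by
  have : {i : Fin n | (i:ℕ) < n - 1} = ↑(Tf n) := by ext i; simp [Tf]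
  rw [this, Set.ncard_coe_finset, card_Tf hn]

section X34

variable (y : E n) (B S : ℝ) (m : Fin n)

/-- generic structure lemma : if the `B`-set is a singleton and the `S`-set has `n-2`
elements, with `B ≠ S`, then the `B`-index is unique and all the rest take value `S`. -/
lemma struct_of_ncard (hn : 5 ≤ n) (hBS : B ≠ S)
    (h1 : {i : Fin n | (i:ℕ) < n - 1 ∧ y i = B}.ncard = 1)
    (h2 : {i : Fin n | (i:ℕ) < n - 1 ∧ y i = S}.ncard = n - 2) :
    ∃ m ∈ Tf n, y m = B ∧ ∀ i ∈ Tf n, i ≠ m → y i = S := by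
  obtain ⟨m, hm⟩ := Set.ncard_eq_one.mp h1
  have hmB : (m:ℕ) < n - 1 ∧ y m = B := by
    have : m ∈ {i : Fin n | (i:ℕ) < n - 1 ∧ y i = B} := hm ▸ rfl
    exact this
  refine ⟨m, mem_Tf.mpr hmB.1, hmB.2, ?_⟩
  have hunion : {i : Fin n | (i:ℕ) < n - 1 ∧ y i = B} ∪ {i : Fin n | (i:ℕ) < n - 1 ∧ y i = S}
      = {i : Fin n | (i:ℕ) < n - 1} := by
    apply Set.eq_of_subset_of_ncard_le
    · rintro i (⟨h, _⟩ | ⟨h, _⟩) <;> exact h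
    · rw [ncard_T hn, Set.ncard_union_eq ?_ (Set.toFinite _) (Set.toFinite _), h1, h2]
      · omega
      · rw [Set.disjoint_left]
        rintro i ⟨_, hiB⟩ ⟨_, hiS⟩
        exact hBS (hiB ▸ hiS ▸ rfl)
    · exact Set.toFinite _
  intro i hiT him
  have hi : i ∈ {i : Fin n | (i:ℕ) < n - 1} := mem_Tf.mp hiT
  rw [← hunion] at hi
  rcases hi with hi | hi
  · exfalso; apply him; have : i ∈ ({m} : Set (Fin n)) := hm ▸ hi; exact this
  · exact hi.2

/-- generic converse : construct the two ncard facts. -/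
lemma ncard_of_struct (hn : 5 ≤ n) (hBS : B ≠ S) (hmT : m ∈ Tf n) (hmB : y m = B)
    (hS : ∀ i ∈ Tf n, i ≠ m → y i = S) :
    {i : Fin n | (i:ℕ) < n - 1 ∧ y i = B}.ncard = 1 ∧
    {i : Fin n | (i:ℕ) < n - 1 ∧ y i = S}.ncard = n - 2 := by
  constructor
  · rw [Set.ncard_eq_one]
    refine ⟨m, ?_⟩
    ext i
    simp only [Set.mem_setOf_eq, Set.mem_singleton_iff]
    constructor
    · rintro ⟨hi, hiB⟩
      by_contra him
      exact hBS ((hS i (mem_Tf.mpr hi) him ▸ hiB).symm ▸ rfl)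
    · rintro rfl
      exact ⟨mem_Tf.mp hmT, hmB⟩
  · have : {i : Fin n | (i:ℕ) < n - 1 ∧ y i = S} = ↑((Tf n).erase m) := by
      ext i
      simp only [Set.mem_setOf_eq, Finset.coe_erase, Set.mem_diff, Finset.mem_coe, mem_Tf,
        Set.mem_singleton_iff]
      constructor
      · rintro ⟨hi, hiS⟩
        refine ⟨hi, fun him => ?_⟩
        rw [him] at hiS; exact hBS (hmB ▸ hiS ▸ rfl)
      · rintro ⟨hi, him⟩
        exact ⟨hi, hS i (mem_Tf.mpr hi) him⟩
    rw [this, Set.ncard_coe_finset, Finset.card_erase_of_mem hmT, card_Tf hn]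
    omega

end X34

set_option maxHeartbeats 2000000 in
lemma case_two (hn : 5 ≤ n) (y : E n) (hH : ∑ i, y i = 2) (hsc : SumCond n y)
    (m : Fin n) (hm : m ∈ Tf n) (b : ℝ) (hab : y m ≠ b)
    (hb : ∀ i ∈ Tf n, i ≠ m → y i = b) :
    y ∈ X3set n 1 ∨ y ∈ X3set n (-1) ∨ (n ≤ 10 ∧ (y ∈ X4set n 1 ∨ y ∈ X4set n (-1))) := by
  have hnR : (5:ℝ) ≤ n := by exact_mod_cast hn
  have hnn : (0:ℝ) < n := n_pos hn
  have hn1 : (0:ℝ) < (n:ℝ) - 1 := n1_pos hn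
  have hne1 : (n:ℝ) ≠ 0 := hnn.ne'
  have hne2 : (n:ℝ) - 1 ≠ 0 := hn1.ne'
  set a := y m with ha_def
  set t := y (lastI n hn) with ht_def
  have hsum : a + ((n:ℝ)-2)*b + t = 2 := by
    rw [sum_split hn y, sum_T_two hn y m hm b hb] at hH
    linarith
  have hA : Av y = a^2 + ((n:ℝ)-2)*b^2 + t^2 := by
    rw [Av, sum_split hn (fun k => y k ^ 2),
      sum_T_two hn _ m hm (b^2) (fun i hi hne => by rw [hb i hi hne])]
  -- two indices in Tf n distinct from m
  have hcard : 1 < ((Tf n).erase m).card := by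
    rw [Finset.card_erase_of_mem hm, card_Tf hn]; omega
  obtain ⟨i1, hi1, i2, hi2, h12⟩ := Finset.one_lt_card.mp hcard
  have hi1T := Finset.mem_of_mem_erase hi1
  have hi1m := Finset.ne_of_mem_erase hi1
  have hi2T := Finset.mem_of_mem_erase hi2
  have hi2m := Finset.ne_of_mem_erase hi2
  have hs1 := hsc i1 i2 h12 (mem_Tf.mp hi1T) (mem_Tf.mp hi2T)
  have hs2 := hsc m i1 (Ne.symm hi1m) (mem_Tf.mp hm) (mem_Tf.mp hi1T)
  rw [hb i1 hi1T hi1m, hb i2 hi2T hi2m, hA] at hs1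
  rw [hb i1 hi1T hi1m, hA, ← ha_def] at hs2
  have hlast : ∀ i : Fin n, (i:ℕ) = n - 1 → y i = t := fun i hi => by rw [eq_lastI hn hi]
  rcases hs1 with hs1 | hs1 <;> rcases hs2 with hs2 | hs2
  · exact absurd (by linarith : a = b) hab
  · -- 4b = A, 2(a+b) = A - 2 : a = b - 1, X4 case
    have ha2 : a = b - 1 := by linarith
    have ht2 : t = 3 - ((n:ℝ)-1)*b := by linarith
    have key : (n:ℝ)*((n:ℝ)-1)*b^2 - 6*(n:ℝ)*b + 10 = 0 := by
      linear_combination (-1:ℝ)*hs1 - (a + b - 1)*ha2 - (t + 3 - ((n:ℝ)-1)*b)*ht2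
    have hsq : ((n:ℝ)*((n:ℝ)-1)*b - 3*n)^2 = 10*(n:ℝ) - (n:ℝ)^2 := by
      linear_combination ((n:ℝ)*((n:ℝ)-1)) * key
    have h10 : n ≤ 10 := by
      by_contra hcon
      push_neg at hcon
      have : (11:ℝ) ≤ n := by exact_mod_cast hcon
      nlinarith [sq_nonneg ((n:ℝ)*((n:ℝ)-1)*b - 3*n)]
    set s := Real.sqrt (10*(n:ℝ) - (n:ℝ)^2) with hs_def
    have hs2' : s^2 = 10*(n:ℝ) - (n:ℝ)^2 := Real.sq_sqrt (by nlinarith [sq_nonneg ((n:ℝ)*((n:ℝ)-1)*b - 3*n)])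
    have hs0 : (0:ℝ) ≤ s := Real.sqrt_nonneg _
    have habs : |(n:ℝ)*((n:ℝ)-1)*b - 3*n| = s := by
      have h1 : Real.sqrt (((n:ℝ)*((n:ℝ)-1)*b - 3*n)^2) = Real.sqrt (s^2) := by rw [hsq, hs2']
      rwa [Real.sqrt_sq_eq_abs, Real.sqrt_sq hs0] at h1
    refine Or.inr (Or.inr ⟨h10, ?_⟩)
    rcases abs_cases ((n:ℝ)*((n:ℝ)-1)*b - 3*n) with ⟨heq, _⟩ | ⟨heq, _⟩ <;> rw [heq] at habs
    · -- ε = 1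
      left
      have hbv : b = (3*(n:ℝ) + 1*s)/((n:ℝ)*((n:ℝ)-1)) := by field_simp; linarith
      have hav : a = (-(n:ℝ)^2 + 4*(n:ℝ) + 1*s)/((n:ℝ)*((n:ℝ)-1)) := by
        rw [ha2, hbv]; field_simp; ring
      have htv : t = -1 * s / n := by rw [ht2, hbv]; field_simp; ring
      obtain ⟨c1, c2⟩ := ncard_of_struct y
        ((-(n:ℝ)^2 + 4*(n:ℝ) + 1*s)/((n:ℝ)*((n:ℝ)-1)))
        ((3*(n:ℝ) + 1*s)/((n:ℝ)*((n:ℝ)-1))) m hn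
        (fun h => by
          have : (-(n:ℝ)^2 + 4*(n:ℝ) + 1*s) = (3*(n:ℝ) + 1*s) := by
            field_simp at h; linarith
          nlinarith)
        hm (by rw [← ha_def, hav]) (fun i hi hne => by rw [hb i hi hne, hbv])
      exact ⟨c2, c1, fun i hi => by rw [hlast i hi, htv]⟩
    · -- ε = -1
      right
      have hbv : b = (3*(n:ℝ) + (-1)*s)/((n:ℝ)*((n:ℝ)-1)) := by field_simp; linarith
      have hav : a = (-(n:ℝ)^2 + 4*(n:ℝ) + (-1)*s)/((n:ℝ)*((n:ℝ)-1)) := by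
        rw [ha2, hbv]; field_simp; ring
      have htv : t = -(-1) * s / n := by rw [ht2, hbv]; field_simp; ring
      obtain ⟨c1, c2⟩ := ncard_of_struct y
        ((-(n:ℝ)^2 + 4*(n:ℝ) + (-1)*s)/((n:ℝ)*((n:ℝ)-1)))
        ((3*(n:ℝ) + (-1)*s)/((n:ℝ)*((n:ℝ)-1))) m hn
        (fun h => by
          have : (-(n:ℝ)^2 + 4*(n:ℝ) + (-1)*s) = (3*(n:ℝ) + (-1)*s) := by
            field_simp at h; linarith
          nlinarith)
        hm (by rw [← ha_def, hav]) (fun i hi hne => by rw [hb i hi hne, hbv])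
      exact ⟨c2, c1, fun i hi => by rw [hlast i hi, htv]⟩
  · -- 4b = A - 2, 2(a+b) = A : a = b + 1, X3 case
    have ha2 : a = b + 1 := by linarith
    have ht2 : t = 1 - ((n:ℝ)-1)*b := by linarith
    have key : (n:ℝ)*b*(((n:ℝ)-1)*b - 2) = 0 := by
      linear_combination (-1:ℝ)*hs1 - (a + b + 1)*ha2 - (t + 1 - ((n:ℝ)-1)*b)*ht2
    have hbor : b = 0 ∨ b = 2/((n:ℝ)-1) := by
      rcases mul_eq_zero.mp key with h | h
      · rcases mul_eq_zero.mp h with h' | h'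
        · exact absurd h' hne1
        · left; exact h'
      · right; field_simp; linarith
    rcases hbor with rfl | hbv
    · -- b = 0 : ε = -1
      right; left
      have hav : a = 1 := by linarith
      have htv : t = 1 := by linarith
      obtain ⟨c1, c2⟩ := ncard_of_struct y (((n:ℝ) + (-1))/((n:ℝ)-1)) ((1 + (-1))/((n:ℝ)-1)) m hn
        (by intro h; field_simp at h; linarith)
        hm (by rw [← ha_def, hav]; field_simp; ring) (fun i hi hne => by rw [hb i hi hne]; norm_num)
      exact ⟨c1, c2, fun i hi => by rw [hlast i hi, htv]; norm_num⟩
    · -- b = 2/(n-1) : ε = 1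
      left
      have hav : a = ((n:ℝ) + 1)/((n:ℝ)-1) := by rw [ha2, hbv]; field_simp; ring
      have htv : t = -1 := by rw [ht2, hbv]; field_simp; ring
      obtain ⟨c1, c2⟩ := ncard_of_struct y (((n:ℝ) + 1)/((n:ℝ)-1)) ((1 + 1)/((n:ℝ)-1)) m hn
        (by intro h; field_simp at h; linarith)
        hm (by rw [← ha_def, hav]) (fun i hi hne => by rw [hb i hi hne, hbv]; norm_num)
      exact ⟨c1, c2, fun i hi => by rw [hlast i hi, htv]⟩
  · exact absurd (by linarith : a = b) hab

lemma lastI_val (hn : 5 ≤ n) : ((lastI n hn : Fin n) : ℕ) = n - 1 := rfl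


lemma X1_sumCond (hn : 5 ≤ n) (ε : ℝ) (hε : ε^2 = 1) {y : E n} (hy : y ∈ X1set n ε) :
    SumCond n y := by
  obtain ⟨h1, h2⟩ := hy
  have hnn : (0:ℝ) < n := n_pos hn
  have hn1 : (0:ℝ) < (n:ℝ) - 1 := n1_pos hn
  obtain ⟨c, hc_def⟩ : ∃ c : ℝ, c = ε * Real.sqrt n := ⟨_, rfl⟩
  have hc : c^2 = n := by
    rw [hc_def, mul_pow, hε, one_mul, Real.sq_sqrt hnn.le]
  have hb : ∀ i ∈ Tf n, y i = (2*(n:ℝ) + 2*c)/((n:ℝ)*((n:ℝ)-1)) := by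
    intro i hi; rw [h1 i (mem_Tf.mp hi), hc_def]; ring
  have ht : y (lastI n hn) = -(2*c)/n := by
    rw [h2 _ (lastI_val hn), hc_def]; ring
  have hAv : Av y = ((n:ℝ)-1)*((2*(n:ℝ) + 2*c)/((n:ℝ)*((n:ℝ)-1)))^2 + (-(2*c)/(n:ℝ))^2 := by
    rw [Av, sum_split hn (fun k => y k ^ 2),
      sum_T_const hn _ _ (fun i hi => by rw [hb i hi]), ht]
  intro i j hij hi hj
  rw [hb i (mem_Tf.mpr hi), hb j (mem_Tf.mpr hj), hAv]
  left
  have h1' : (n:ℝ) ≠ 0 := hnn.ne'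
  have h2' : (n:ℝ) - 1 ≠ 0 := hn1.ne'
  field_simp
  ring_nf
  simp only [hc]
  ring

lemma X2_sumCond (hn : 5 ≤ n) (ε : ℝ) (hε : ε^2 = 1) {y : E n} (hy : y ∈ X2set n ε) :
    SumCond n y := by
  obtain ⟨h1, h2⟩ := hy
  have hnn : (0:ℝ) < n := n_pos hn
  have hn1 : (0:ℝ) < (n:ℝ) - 1 := n1_pos hn
  obtain ⟨c, hc_def⟩ : ∃ c : ℝ, c = ε * Real.sqrt (2*(n:ℝ)^2 + 2*n) := ⟨_, rfl⟩
  have hc : c^2 = 2*(n:ℝ)^2 + 2*n := by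
    rw [hc_def, mul_pow, hε, one_mul, Real.sq_sqrt (by positivity)]
  have hb : ∀ i ∈ Tf n, y i = (2*(n:ℝ) + c)/((n:ℝ)*((n:ℝ)-1)) := by
    intro i hi; rw [h1 i (mem_Tf.mp hi), hc_def]
  have ht : y (lastI n hn) = -c/n := by
    rw [h2 _ (lastI_val hn), hc_def]; ring
  have hAv : Av y = ((n:ℝ)-1)*((2*(n:ℝ) + c)/((n:ℝ)*((n:ℝ)-1)))^2 + (-c/(n:ℝ))^2 := by
    rw [Av, sum_split hn (fun k => y k ^ 2),
      sum_T_const hn _ _ (fun i hi => by rw [hb i hi]), ht]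
  intro i j hij hi hj
  rw [hb i (mem_Tf.mpr hi), hb j (mem_Tf.mpr hj), hAv]
  right
  have h1' : (n:ℝ) ≠ 0 := hnn.ne'
  have h2' : (n:ℝ) - 1 ≠ 0 := hn1.ne'
  field_simp
  ring_nf
  simp only [hc]
  ring

lemma X3_BS_ne (hn : 5 ≤ n) (ε : ℝ) :
    ((n:ℝ)+ε)/((n:ℝ)-1) ≠ (1+ε)/((n:ℝ)-1) := by
  have hn1 : (0:ℝ) < (n:ℝ) - 1 := n1_pos hn
  have hnR : (5:ℝ) ≤ n := by exact_mod_cast hn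
  intro h
  rw [div_eq_div_iff hn1.ne' hn1.ne'] at h
  nlinarith

lemma X3_struct (hn : 5 ≤ n) (ε : ℝ) {y : E n} (hy : y ∈ X3set n ε) :
    ∃ m ∈ Tf n, y m = ((n:ℝ)+ε)/((n:ℝ)-1) ∧
      (∀ i ∈ Tf n, i ≠ m → y i = (1+ε)/((n:ℝ)-1)) ∧ y (lastI n hn) = -ε := by
  obtain ⟨h1, h2, h3⟩ := hy
  obtain ⟨m, hm, hB, hS⟩ := struct_of_ncard y _ _ hn (X3_BS_ne hn ε) h1 h2
  exact ⟨m, hm, hB, hS, h3 _ (lastI_val hn)⟩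

lemma X3_sumCond (hn : 5 ≤ n) (ε : ℝ) (hε : ε^2 = 1) {y : E n} (hy : y ∈ X3set n ε) :
    SumCond n y := by
  obtain ⟨m, hm, hB, hS, ht⟩ := X3_struct hn ε hy
  have hnn : (0:ℝ) < n := n_pos hn
  have hn1 : (0:ℝ) < (n:ℝ) - 1 := n1_pos hn
  have h1' : (n:ℝ) ≠ 0 := hnn.ne'
  have h2' : (n:ℝ) - 1 ≠ 0 := hn1.ne'
  have hAv : Av y = (((n:ℝ)+ε)/((n:ℝ)-1))^2 + ((n:ℝ)-2)*((1+ε)/((n:ℝ)-1))^2 + (-ε)^2 := by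
    rw [Av, sum_split hn (fun k => y k ^ 2),
      sum_T_two hn _ m hm _ (fun i hi hne => by rw [hS i hi hne]), hB, ht]
  intro i j hij hi hj
  rw [hAv]
  by_cases him : i = m <;> by_cases hjm : j = m
  · exact absurd (him.trans hjm.symm) hij
  · rw [him, hB, hS j (mem_Tf.mpr hj) hjm]
    left; field_simp; ring_nf; simp only [hε]; ring
  · rw [hjm, hB, hS i (mem_Tf.mpr hi) him]
    left; field_simp; ring_nf; simp only [hε]; ring
  · rw [hS i (mem_Tf.mpr hi) him, hS j (mem_Tf.mpr hj) hjm]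
    right; field_simp; ring_nf; simp only [hε]; ring

lemma X4_c_nonneg (hn : 5 ≤ n) (h10 : n ≤ 10) : (0:ℝ) ≤ 10*(n:ℝ) - (n:ℝ)^2 := by
  have h1 : (n:ℝ) ≤ 10 := by exact_mod_cast h10
  have h2 : (0:ℝ) ≤ n := by positivity
  nlinarith

lemma X4_BS_ne (hn : 5 ≤ n) (ε : ℝ) :
    (-(n:ℝ)^2 + 4*n + ε * Real.sqrt (10*n - (n:ℝ)^2))/((n:ℝ)*((n:ℝ)-1)) ≠
      (3*(n:ℝ) + ε * Real.sqrt (10*n - (n:ℝ)^2))/((n:ℝ)*((n:ℝ)-1)) := by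
  have hnn : (0:ℝ) < n := n_pos hn
  have hn1 : (0:ℝ) < (n:ℝ) - 1 := n1_pos hn
  have hnR : (5:ℝ) ≤ n := by exact_mod_cast hn
  intro h
  rw [div_eq_div_iff (by positivity) (by positivity)] at h
  have : -(n:ℝ)^2 + 4*n = 3*(n:ℝ) := by nlinarith
  nlinarith

lemma X4_struct (hn : 5 ≤ n) (ε : ℝ) {y : E n} (hy : y ∈ X4set n ε) :
    ∃ m ∈ Tf n,
      y m = (-(n:ℝ)^2 + 4*n + ε * Real.sqrt (10*n - (n:ℝ)^2))/((n:ℝ)*((n:ℝ)-1)) ∧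
      (∀ i ∈ Tf n, i ≠ m →
        y i = (3*(n:ℝ) + ε * Real.sqrt (10*n - (n:ℝ)^2))/((n:ℝ)*((n:ℝ)-1))) ∧
      y (lastI n hn) = -ε * Real.sqrt (10*n - (n:ℝ)^2) / n := by
  obtain ⟨h1, h2, h3⟩ := hy
  obtain ⟨m, hm, hB, hS⟩ := struct_of_ncard y _ _ hn (X4_BS_ne hn ε) h2 h1
  exact ⟨m, hm, hB, hS, h3 _ (lastI_val hn)⟩

lemma X4_sumCond (hn : 5 ≤ n) (h10 : n ≤ 10) (ε : ℝ) (hε : ε^2 = 1) {y : E n}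
    (hy : y ∈ X4set n ε) : SumCond n y := by
  obtain ⟨m, hm, hB, hS, ht⟩ := X4_struct hn ε hy
  have hnn : (0:ℝ) < n := n_pos hn
  have hn1 : (0:ℝ) < (n:ℝ) - 1 := n1_pos hn
  have h1' : (n:ℝ) ≠ 0 := hnn.ne'
  have h2' : (n:ℝ) - 1 ≠ 0 := hn1.ne'
  obtain ⟨c, hc_def⟩ : ∃ c : ℝ, c = ε * Real.sqrt (10*n - (n:ℝ)^2) := ⟨_, rfl⟩
  have hc : c^2 = 10*(n:ℝ) - (n:ℝ)^2 := by
    rw [hc_def, mul_pow, hε, one_mul, Real.sq_sqrt (X4_c_nonneg hn h10)]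
  have hB' : y m = (-(n:ℝ)^2 + 4*n + c)/((n:ℝ)*((n:ℝ)-1)) := by rw [hB, hc_def]
  have hS' : ∀ i ∈ Tf n, i ≠ m → y i = (3*(n:ℝ) + c)/((n:ℝ)*((n:ℝ)-1)) := by
    intro i hi hne; rw [hS i hi hne, hc_def]
  have ht' : y (lastI n hn) = -c/n := by rw [ht, hc_def]; ring
  have hAv : Av y = ((-(n:ℝ)^2 + 4*n + c)/((n:ℝ)*((n:ℝ)-1)))^2
      + ((n:ℝ)-2)*((3*(n:ℝ) + c)/((n:ℝ)*((n:ℝ)-1)))^2 + (-c/(n:ℝ))^2 := by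
    rw [Av, sum_split hn (fun k => y k ^ 2),
      sum_T_two hn _ m hm _ (fun i hi hne => by rw [hS' i hi hne]), hB', ht']
  intro i j hij hi hj
  rw [hAv]
  by_cases him : i = m <;> by_cases hjm : j = m
  · exact absurd (him.trans hjm.symm) hij
  · rw [him, hB', hS' j (mem_Tf.mpr hj) hjm]
    right; field_simp; ring_nf; simp only [hc]; ring
  · rw [hjm, hB', hS' i (mem_Tf.mpr hi) him]
    right; field_simp; ring_nf; simp only [hc]; ring
  · rw [hS' i (mem_Tf.mpr hi) him, hS' j (mem_Tf.mpr hj) hjm]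
    left; field_simp; ring_nf; simp only [hc]; ring

lemma vec_ext {u v : E n} (h : ∀ i : Fin n, u i = v i) : u = v := PiLp.ext h

lemma X1_eq (hn : 5 ≤ n) (ε : ℝ) {u v : E n} (hu : u ∈ X1set n ε) (hv : v ∈ X1set n ε) :
    u = v := by
  obtain ⟨hu1, hu2⟩ := hu
  obtain ⟨hv1, hv2⟩ := hv
  apply vec_ext
  intro i
  rcases val_cases hn i with h | h
  · rw [hu1 i h, hv1 i h]
  · rw [hu2 i h, hv2 i h]

lemma X2_eq (hn : 5 ≤ n) (ε : ℝ) {u v : E n} (hu : u ∈ X2set n ε) (hv : v ∈ X2set n ε) :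
    u = v := by
  obtain ⟨hu1, hu2⟩ := hu
  obtain ⟨hv1, hv2⟩ := hv
  apply vec_ext
  intro i
  rcases val_cases hn i with h | h
  · rw [hu1 i h, hv1 i h]
  · rw [hu2 i h, hv2 i h]

lemma dist_swap (u v : E n) (m m' : Fin n) (hne : m ≠ m')
    (h1 : u m - v m = 1) (h2 : u m' - v m' = -1)
    (h0 : ∀ i, i ≠ m → i ≠ m' → u i = v i) : dist u v = Real.sqrt 2 := by
  apply eq_sqrt2_of_sq dist_nonneg
  rw [dist_sq]
  rw [Finset.sum_eq_add_of_mem m m' (Finset.mem_univ _) (Finset.mem_univ _) hne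
    (fun c _ hc => by rw [h0 c hc.1 hc.2]; ring)]
  rw [h1, h2]; norm_num

lemma X3_pairwise (hn : 5 ≤ n) (ε : ℝ) {u v : E n} (hu : u ∈ X3set n ε) (hv : v ∈ X3set n ε)
    (huv : u ≠ v) : dist u v = Real.sqrt 2 := by
  have hn1 : (0:ℝ) < (n:ℝ) - 1 := n1_pos hn
  obtain ⟨m, hm, hB, hS, ht⟩ := X3_struct hn ε hu
  obtain ⟨m', hm', hB', hS', ht'⟩ := X3_struct hn ε hv
  by_cases hmm : m = m'
  · exfalso
    apply huv
    apply vec_ext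
    intro i
    rcases val_cases hn i with h | h
    · by_cases him : i = m
      · rw [him, hB, hmm]; exact hB'.symm
      · rw [hS i (mem_Tf.mpr h) him, hS' i (mem_Tf.mpr h) (fun hc => him (hc.trans hmm.symm))]
    · rw [eq_lastI hn h, ht, ht']
  have hdiff : ((n:ℝ)+ε)/((n:ℝ)-1) - (1+ε)/((n:ℝ)-1) = 1 := by
    field_simp; ring
  apply dist_swap u v m m' hmm
  · rw [hB, hS' m hm (hmm)]; exact hdiff
  · rw [hS m' hm' (Ne.symm hmm), hB']; linarith
  · intro i him him'
    rcases val_cases hn i with h | h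
    · rw [hS i (mem_Tf.mpr h) him, hS' i (mem_Tf.mpr h) him']
    · rw [eq_lastI hn h, ht, ht']

lemma X4_pairwise (hn : 5 ≤ n) (ε : ℝ) {u v : E n} (hu : u ∈ X4set n ε) (hv : v ∈ X4set n ε)
    (huv : u ≠ v) : dist u v = Real.sqrt 2 := by
  have hnn : (0:ℝ) < n := n_pos hn
  have hn1 : (0:ℝ) < (n:ℝ) - 1 := n1_pos hn
  obtain ⟨m, hm, hB, hS, ht⟩ := X4_struct hn ε hu
  obtain ⟨m', hm', hB', hS', ht'⟩ := X4_struct hn ε hv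
  by_cases hmm : m = m'
  · exfalso
    apply huv
    apply vec_ext
    intro i
    rcases val_cases hn i with h | h
    · by_cases him : i = m
      · rw [him, hB, hmm]; exact hB'.symm
      · rw [hS i (mem_Tf.mpr h) him, hS' i (mem_Tf.mpr h) (fun hc => him (hc.trans hmm.symm))]
    · rw [eq_lastI hn h, ht, ht']
  have hdiff : (3*(n:ℝ) + ε * Real.sqrt (10*n - (n:ℝ)^2))/((n:ℝ)*((n:ℝ)-1))
      - (-(n:ℝ)^2 + 4*n + ε * Real.sqrt (10*n - (n:ℝ)^2))/((n:ℝ)*((n:ℝ)-1)) = 1 := by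
    field_simp
    ring
  apply dist_swap u v m' m (Ne.symm hmm)
  · rw [hS m' hm' (Ne.symm hmm), hB']; exact hdiff
  · rw [hB, hS' m hm hmm]; linarith
  · intro i him' him
    rcases val_cases hn i with h | h
    · rw [hS i (mem_Tf.mpr h) him, hS' i (mem_Tf.mpr h) him']
    · rw [eq_lastI hn h, ht, ht']

end AV

open AV in
set_option maxHeartbeats 1000000 in
theorem addable_vectors_Jprime (n : ℕ) (hn : 5 ≤ n) :
    (∀ y ∈ Hyp2 n \ JohnsonRep' n,
      (IsSDistanceSet 2 (JohnsonRep' n ∪ {y}) ↔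
        (y ∈ X1set n 1 ∪ X1set n (-1) ∪ X2set n 1 ∪ X2set n (-1) ∪
            X3set n 1 ∪ X3set n (-1) ∨
          (n ≤ 10 ∧ y ∈ X4set n 1 ∪ X4set n (-1))))) ∧
    (∀ X ∈ ({X1set n 1, X1set n (-1), X2set n 1, X2set n (-1), X3set n 1, X3set n (-1)} :
        Set (Set (EuclideanSpace ℝ (Fin n)))) ∪
        (if n ≤ 10 then {X4set n 1, X4set n (-1)} else ∅),
      (∀ u ∈ X, ∀ v ∈ X, u ≠ v → dist u v = Real.sqrt 2 ∨ dist u v = 2) ∧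
      IsSDistanceSet 2 (JohnsonRep' n ∪ X)) := by
  constructor
  · rintro y ⟨hyH, hyJ⟩
    have hyH' : ∑ i, y i = 2 := hyH
    constructor
    · intro h2d
      have hsc := sumCond_of_good hn y (good_of_twoDist hn y hyJ h2d)
      rcases classify_two hn y hsc with ⟨b, hb⟩ | ⟨m, hm, b, hab, hb⟩
      · left
        simp only [Set.mem_union]
        rcases case_const hn y hyH' hsc b hb with h|h|h|h <;> tauto
      · rcases case_two hn y hyH' hsc m hm b hab hb with h|h|⟨h10, h⟩
        · left; simp only [Set.mem_union]; tauto
        · left; simp only [Set.mem_union]; tauto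
        · right; exact ⟨h10, by simp only [Set.mem_union]; tauto⟩
    · intro hmem
      have hsc : SumCond n y := by
        rcases hmem with hmem | ⟨h10, hmem⟩
        · simp only [Set.mem_union] at hmem
          rcases hmem with ((((h|h)|h)|h)|h)|h
          · exact X1_sumCond hn 1 (by norm_num) h
          · exact X1_sumCond hn (-1) (by norm_num) h
          · exact X2_sumCond hn 1 (by norm_num) h
          · exact X2_sumCond hn (-1) (by norm_num) h
          · exact X3_sumCond hn 1 (by norm_num) h
          · exact X3_sumCond hn (-1) (by norm_num) h
        · rcases hmem with h | h
          · exact X4_sumCond hn h10 1 (by norm_num) h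
          · exact X4_sumCond hn h10 (-1) (by norm_num) h
      exact twoDist_of hn {y}
        (fun x hx u hu => by
          rw [Set.mem_singleton_iff] at hx
          subst hx
          exact good_of_sumCond hn x hsc u hu)
        (fun x hx x' hx' hne => by
          rw [Set.mem_singleton_iff] at hx hx'
          subst hx; subst hx'
          exact absurd rfl hne)
  · intro X hX
    have main : ∀ (hsc : ∀ x ∈ X, SumCond n x)
        (hpw : ∀ u ∈ X, ∀ v ∈ X, u ≠ v → dist u v = Real.sqrt 2 ∨ dist u v = 2),
        (∀ u ∈ X, ∀ v ∈ X, u ≠ v → dist u v = Real.sqrt 2 ∨ dist u v = 2) ∧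
        IsSDistanceSet 2 (JohnsonRep' n ∪ X) := fun hsc hpw =>
      ⟨hpw, twoDist_of hn X (fun x hx u hu => good_of_sumCond hn x (hsc x hx) u hu) hpw⟩
    by_cases h10 : n ≤ 10
    · rw [if_pos h10] at hX
      simp only [Set.mem_union, Set.mem_insert_iff, Set.mem_singleton_iff] at hX
      rcases hX with (rfl|rfl|rfl|rfl|rfl|rfl)|(rfl|rfl)
      · exact main (fun x hx => X1_sumCond hn 1 (by norm_num) hx)
          (fun u hu v hv hne => absurd (X1_eq hn 1 hu hv) hne)
      · exact main (fun x hx => X1_sumCond hn (-1) (by norm_num) hx)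
          (fun u hu v hv hne => absurd (X1_eq hn (-1) hu hv) hne)
      · exact main (fun x hx => X2_sumCond hn 1 (by norm_num) hx)
          (fun u hu v hv hne => absurd (X2_eq hn 1 hu hv) hne)
      · exact main (fun x hx => X2_sumCond hn (-1) (by norm_num) hx)
          (fun u hu v hv hne => absurd (X2_eq hn (-1) hu hv) hne)
      · exact main (fun x hx => X3_sumCond hn 1 (by norm_num) hx)
          (fun u hu v hv hne => Or.inl (X3_pairwise hn 1 hu hv hne))
      · exact main (fun x hx => X3_sumCond hn (-1) (by norm_num) hx)
          (fun u hu v hv hne => Or.inl (X3_pairwise hn (-1) hu hv hne))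
      · exact main (fun x hx => X4_sumCond hn h10 1 (by norm_num) hx)
          (fun u hu v hv hne => Or.inl (X4_pairwise hn 1 hu hv hne))
      · exact main (fun x hx => X4_sumCond hn h10 (-1) (by norm_num) hx)
          (fun u hu v hv hne => Or.inl (X4_pairwise hn (-1) hu hv hne))
    · rw [if_neg h10] at hX
      simp only [Set.union_empty, Set.mem_insert_iff, Set.mem_singleton_iff] at hX
      rcases hX with rfl|rfl|rfl|rfl|rfl|rfl
      · exact main (fun x hx => X1_sumCond hn 1 (by norm_num) hx)
          (fun u hu v hv hne => absurd (X1_eq hn 1 hu hv) hne)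
      · exact main (fun x hx => X1_sumCond hn (-1) (by norm_num) hx)
          (fun u hu v hv hne => absurd (X1_eq hn (-1) hu hv) hne)
      · exact main (fun x hx => X2_sumCond hn 1 (by norm_num) hx)
          (fun u hu v hv hne => absurd (X2_eq hn 1 hu hv) hne)
      · exact main (fun x hx => X2_sumCond hn (-1) (by norm_num) hx)
          (fun u hu v hv hne => absurd (X2_eq hn (-1) hu hv) hne)
      · exact main (fun x hx => X3_sumCond hn 1 (by norm_num) hx)
          (fun u hu v hv hne => Or.inl (X3_pairwise hn 1 hu hv hne))
      · exact main (fun x hx => X3_sumCond hn (-1) (by norm_num) hx)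
          (fun u hu v hv hne => Or.inl (X3_pairwise hn (-1) hu hv hne))
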